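/- Suppose Assumption G holds (u_i is upper semicontinuous, concave, u_i(x⁰_i) finite, and u_i(x + r·g) > u_i(x) whenever u_i(x) > −∞ and r > 0), so that D_i(0) = 0. Then a vector p ∈ ℝ^J is a supergradient of D_i at 0 if and only if p·g = 1 and p·w ≥ p·x⁰_i for every w ∈ ℝ^J with u_i(w) ≥ u_i(x⁰_i). -/
import Mathlib


open scoped BigOperators
open Metric Filter

noncomputable section

/-- The inner product `p·y = ∑ j, p j * y j`. -/
def dotp {J : Type*} [Fintype J] (p y : EuclideanSpace ℝ J) : ℝ := ∑ j, p j * y j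

/-- A function `u : ℝ^J → ℝ ∪ {±∞}` is concave iff its hypograph is convex. -/
def HypoConcave {J : Type*} [Fintype J] (u : EuclideanSpace ℝ J → EReal) : Prop :=
  Convex ℝ {q : EuclideanSpace ℝ J × ℝ | (q.2 : EReal) ≤ u q.1}

/-- Indifference price function `D(x) = sup {r ∈ ℝ : u(x⁰ + x − r·g) ≥ u(x⁰)}`,
the supremum being taken in `ℝ ∪ {±∞}`. -/
def indiff {J : Type*} [Fintype J] (u : EuclideanSpace ℝ J → EReal)
    (x0 g x : EuclideanSpace ℝ J) : EReal :=
  sSup {e : EReal | ∃ r : ℝ, e = (r : EReal) ∧ u x0 ≤ u (x0 + x - r • g)}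

/-- `p` is a supergradient of `D` at `xb`: `D xb` is finite and
`D x ≤ D xb + p·(x − xb)` for all `x`. -/
def IsSupergradient {J : Type*} [Fintype J] (D : EuclideanSpace ℝ J → EReal)
    (p xb : EuclideanSpace ℝ J) : Prop :=
  D xb ≠ ⊥ ∧ D xb ≠ ⊤ ∧ ∀ x, D x ≤ D xb + ((dotp p (x - xb) : ℝ) : EReal)

/-- Optimal value `v(z)` of the perturbed market clearing problem `(P_z)`. -/
def marketValue {I J : Type*} [Fintype I] [Fintype J]
    (D : I → EuclideanSpace ℝ J → EReal) (z : EuclideanSpace ℝ J) : EReal :=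
  sSup {e : EReal | ∃ x : I → EuclideanSpace ℝ J, (∑ i, x i) = z ∧ e = ∑ i, D i (x i)}

/-- Optimal value of problem `(P')`, the total consumer surplus at allocation `w`. -/
def CSval {I J : Type*} [Fintype I] [Fintype J]
    (u : I → EuclideanSpace ℝ J → EReal) (g : EuclideanSpace ℝ J)
    (w : I → EuclideanSpace ℝ J) : EReal :=
  sSup {e : EReal | ∃ s : ℝ, e = (s : EReal) ∧ ∃ z : I → EuclideanSpace ℝ J,
    (∑ i, z i) + s • g = ∑ i, w i ∧ ∀ i, u i (w i) ≤ u i (z i)}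

/-- Recession function `u^∞(y) = inf_{α>0} (u(x⁰ + α·y) − u(x⁰))/α`. -/
def recession {J : Type*} [Fintype J] (u : EuclideanSpace ℝ J → EReal)
    (x0 y : EuclideanSpace ℝ J) : EReal :=
  sInf {e : EReal | ∃ α : ℝ, 0 < α ∧ e = (u (x0 + α • y) - u x0) / (α : EReal)}

/-- Pareto efficiency of an allocation `x` with total endowment `∑ i, x i`. -/
def ParetoEfficient {I J : Type*} [Fintype I] [Fintype J]
    (u : I → EuclideanSpace ℝ J → EReal) (x : I → EuclideanSpace ℝ J) : Prop :=
  ¬ ∃ x' : I → EuclideanSpace ℝ J, (∑ i, x' i) = (∑ i, x i) ∧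
      (∀ i, u i (x i) ≤ u i (x' i)) ∧ ∃ i, u i (x i) < u i (x' i)

/-- Lemma ve, 2 ⇔ 3: characterization of supergradients of the
indifference price function at 0. -/

lemma dotp_sub' {J : Type*} [Fintype J] (p a b : EuclideanSpace ℝ J) :
    dotp p (a - b) = dotp p a - dotp p b := by
  simp [dotp, mul_sub, Finset.sum_sub_distrib]

lemma dotp_smul' {J : Type*} [Fintype J] (p a : EuclideanSpace ℝ J) (c : ℝ) :
    dotp p (c • a) = c * dotp p a := by
  simp [dotp, Finset.mul_sum, mul_left_comm]

lemma dotp_add' {J : Type*} [Fintype J] (p a b : EuclideanSpace ℝ J) :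
    dotp p (a + b) = dotp p a + dotp p b := by
  simp [dotp, mul_add, Finset.sum_add_distrib]

lemma indiff_zero {J : Type*} [Fintype J]
    (u : EuclideanSpace ℝ J → EReal) (g x0 : EuclideanSpace ℝ J)
    (hfin : u x0 ≠ ⊥)
    (hmono : ∀ x : EuclideanSpace ℝ J, ∀ r : ℝ, u x ≠ ⊥ → 0 < r →
      u x < u (x + r • g)) :
    indiff u x0 g 0 = 0 := by
  apply le_antisymm
  · apply sSup_le
    rintro e ⟨r, rfl, hr⟩
    rcases le_or_gt r 0 with h | h
    · exact_mod_cast EReal.coe_le_coe_iff.mpr h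
    · exfalso
      have hx : x0 + 0 - r • g + r • g = x0 := by abel
      have hb : u (x0 + 0 - r • g) ≠ ⊥ := by
        intro hbot
        rw [hbot] at hr
        exact hfin (le_bot_iff.mp hr)
      have := hmono (x0 + 0 - r • g) r hb h
      rw [hx] at this
      exact absurd (lt_of_lt_of_le this hr) (lt_irrefl _)
  · apply le_sSup
    exact ⟨0, by norm_num, by simp⟩

theorem supergradient_at_zero_iff
    {J : Type*} [Fintype J] [Nonempty J]
    (u : EuclideanSpace ℝ J → EReal) (g x0 : EuclideanSpace ℝ J)
    (husc : UpperSemicontinuous u)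
    (hconc : HypoConcave u)
    (hne_top : ∀ x, u x ≠ ⊤)
    (hfin : u x0 ≠ ⊥)
    (hmono : ∀ x : EuclideanSpace ℝ J, ∀ r : ℝ, u x ≠ ⊥ → 0 < r →
      u x < u (x + r • g))
    (p : EuclideanSpace ℝ J) :
    IsSupergradient (indiff u x0 g) p 0 ↔
      (dotp p g = 1 ∧ ∀ w : EuclideanSpace ℝ J, u x0 ≤ u w →
        dotp p x0 ≤ dotp p w) := by
  have hD0 : indiff u x0 g 0 = 0 := indiff_zero u g x0 hfin hmono
  constructor
  · rintro ⟨hb, ht, hle⟩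
    constructor
    · have key : ∀ t : ℝ, t ≤ t * dotp p g := by
        intro t
        have hmem : (t : EReal) ≤ indiff u x0 g (t • g) := by
          apply le_sSup
          exact ⟨t, rfl, by simp⟩
        have h2 := hle (t • g)
        rw [hD0, sub_zero, dotp_smul'] at h2
        have : (t : EReal) ≤ ((t * dotp p g : ℝ) : EReal) := by
          calc (t : EReal) ≤ _ := hmem
            _ ≤ _ := h2
            _ = _ := by rw [zero_add]
        exact_mod_cast this
      have h1 := key 1
      have h2 := key (-1)
      nlinarith
    · intro w hw
      have hmem : ((0 : ℝ) : EReal) ≤ indiff u x0 g (w - x0) := by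
        apply le_sSup
        refine ⟨0, rfl, ?_⟩
        have : x0 + (w - x0) - (0 : ℝ) • g = w := by
          rw [zero_smul]; abel
        rw [this]; exact hw
      have h2 := hle (w - x0)
      rw [hD0, sub_zero, zero_add, dotp_sub'] at h2
      have : ((0 : ℝ) : EReal) ≤ ((dotp p w - dotp p x0 : ℝ) : EReal) :=
        le_trans hmem h2
      have := EReal.coe_le_coe_iff.mp this
      linarith
  · rintro ⟨hg, hw⟩
    refine ⟨by simp [hD0], by simp [hD0], ?_⟩
    intro x
    rw [hD0, sub_zero, zero_add]
    apply sSup_le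
    rintro e ⟨r, rfl, hr⟩
    have h1 := hw _ hr
    have h2 : dotp p (x0 + x - r • g) = dotp p x0 + dotp p x - r * dotp p g := by
      rw [dotp_sub', dotp_add', dotp_smul']
    rw [h2, hg] at h1
    exact EReal.coe_le_coe_iff.mpr (by linarith)
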